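/- Let e₁,…,eₙ ∈ Z/2Z[y₁,…,yₙ] be the elementary symmetric polynomials, and let Sq² be the Z/2Z-derivation on the subring of symmetric polynomials determined by Sq²(eᵢ) = (i+1)eᵢ₊₁ + e₁eᵢ (with e₀ = 1, eⱼ = 0 outside [0,n]). For a partition (a₁ ≥ ⋯ ≥ a_l) with each aᵢ ≤ n, let x_{a₁,…,a_l} = det(e_{aᵢ−i+j})_{1≤i,j≤l} be the corresponding Schur polynomial (in the e-basis). Then Sq²(x_{a₁,…,a_l}) = Σ_{i=1}^{l} (aᵢ−i+1)·x_{a₁,…,aᵢ₋₁, aᵢ+1, aᵢ₊₁,…,a_l} + l·x_{a₁,…,a_l,1}, where coefficients are reduced modulo 2 and any term whose index sequence is not weakly decreasing or has an entry > n is interpreted via the determinant formula. -/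

import Mathlib

open MvPolynomial

/-- `eZ n m` is the elementary symmetric polynomial `e_m` in `(ℤ/2)[y₁,…,yₙ]`,
extended to integer indices by `0` for `m < 0` (it already vanishes for `m > n`,
and `e₀ = 1`). -/
noncomputable def eZ (n : ℕ) (m : ℤ) : MvPolynomial (Fin n) (ZMod 2) :=
  if 0 ≤ m then MvPolynomial.esymm (Fin n) (ZMod 2) m.toNat else 0

/-- The Schur polynomial in the `e`-basis (dual Jacobi–Trudi):
`x_{a₁,…,a_l} = det (e_{aᵢ - i + j})` (1-indexed `i, j`). -/
noncomputable def schurE (n l : ℕ) (a : Fin l → ℕ) : MvPolynomial (Fin n) (ZMod 2) :=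
  Matrix.det (Matrix.of fun i j : Fin l => eZ n ((a i : ℤ) - (i : ℤ) + (j : ℤ)))

section general

open Equiv Finset

variable {R A : Type*} [CommRing R] [CommRing A] [Algebra R A]
variable (D : Derivation R A A)
variable {ι : Type*} [DecidableEq ι] [Fintype ι]

omit [Fintype ι] in
lemma deriv_prod (s : Finset ι) (f : ι → A) :
    D (∏ i ∈ s, f i) = ∑ i ∈ s, (∏ j ∈ s.erase i, f j) * D (f i) := by
  classical
  induction s using Finset.induction_on with
  | empty => simp
  | insert _ _ ha ih =>
    rename_i a s
    rw [Finset.prod_insert ha, D.leibniz, smul_eq_mul, smul_eq_mul, ih,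
        Finset.sum_insert ha, Finset.erase_insert ha, add_comm]
    congr 1
    rw [Finset.mul_sum]
    refine Finset.sum_congr rfl fun i hi => ?_
    rw [← mul_assoc]
    congr 1
    rw [Finset.erase_insert_of_ne (by rintro rfl; exact ha hi),
        Finset.prod_insert (fun h => ha (Finset.mem_of_mem_erase h))]

lemma det_updateColumn_expand (M : Matrix ι ι A) (c : ι) (u : ι → A) :
    (M.updateCol c u).det
      = ∑ σ : Perm ι, Perm.sign σ • (u (σ c) * ∏ i ∈ Finset.univ.erase c, M (σ i) i) := by
  rw [Matrix.det_apply]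
  refine Finset.sum_congr rfl fun σ _ => ?_
  congr 1
  rw [← Finset.mul_prod_erase Finset.univ _ (Finset.mem_univ c)]
  congr 1
  · simp [Matrix.updateCol_apply]
  · exact Finset.prod_congr rfl fun i hi => by
      simp [Matrix.updateCol_apply, Finset.ne_of_mem_erase hi]

lemma det_updateRow_expand (M : Matrix ι ι A) (r : ι) (v : ι → A) :
    (M.updateRow r v).det
      = ∑ σ : Perm ι, Perm.sign σ • (v (σ⁻¹ r) * ∏ i ∈ Finset.univ.erase (σ⁻¹ r), M (σ i) i) := by
  rw [Matrix.det_apply]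
  refine Finset.sum_congr rfl fun σ _ => ?_
  congr 1
  rw [← Finset.mul_prod_erase Finset.univ _ (Finset.mem_univ (σ⁻¹ r))]
  congr 1
  · simp [Matrix.updateRow_apply]
  · refine Finset.prod_congr rfl fun i hi => ?_
    have : σ i ≠ r := fun h => Finset.ne_of_mem_erase hi (by simp [← h])
    simp [Matrix.updateRow_apply, this]

lemma sum_det_updateColumn_eq_sum_det_updateRow (M W : Matrix ι ι A) :
    ∑ c, (M.updateCol c (fun r => W r c)).det
      = ∑ r, (M.updateRow r (W r)).det := by
  simp_rw [det_updateColumn_expand, det_updateRow_expand]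
  rw [Finset.sum_comm, Finset.sum_comm (s := (Finset.univ : Finset ι))]
  refine Finset.sum_congr rfl fun σ _ => ?_
  refine Fintype.sum_equiv σ _ _ fun c => ?_
  simp

lemma deriv_det (M : Matrix ι ι A) :
    D M.det = ∑ c, (M.updateCol c (fun r => D (M r c))).det := by
  rw [Matrix.det_apply, map_sum]
  simp_rw [det_updateColumn_expand]
  rw [Finset.sum_comm]
  refine Finset.sum_congr rfl fun σ _ => ?_
  rw [Units.smul_def, map_zsmul, deriv_prod, Finset.smul_sum]
  refine Finset.sum_congr rfl fun c _ => ?_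
  rw [Units.smul_def]
  congr 1
  rw [mul_comm]

lemma det_updateRow_smul' (M : Matrix ι ι A) (r : ι) (z : R) (u : ι → A) :
    (M.updateRow r (fun c => z • u c)).det = z • (M.updateRow r u).det := by
  have h1 : (fun c => z • u c) = (algebraMap R A z) • u := by
    funext c; simp [Algebra.smul_def]
  rw [h1, Matrix.det_updateRow_smul, ← Algebra.smul_def]

lemma det_updateColumn_smul' (M : Matrix ι ι A) (c : ι) (z : R) (u : ι → A) :
    (M.updateCol c (fun r => z • u r)).det = z • (M.updateCol c u).det := by
  have h1 : (fun r => z • u r) = (algebraMap R A z) • u := by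
    funext r; simp [Algebra.smul_def]
  rw [h1, Matrix.det_updateCol_smul, ← Algebra.smul_def]

end general

lemma eZ_neg {n : ℕ} {m : ℤ} (h : m < 0) : eZ n m = 0 := by
  rw [eZ, if_neg (by omega)]

lemma eZ_zero (n : ℕ) : eZ n 0 = 1 := by
  simp [eZ, esymm_zero]

lemma eZ_gt {n : ℕ} {m : ℤ} (h : (n : ℤ) < m) : eZ n m = 0 := by
  rw [eZ, if_pos (by omega), esymm, Finset.powersetCard_eq_empty.mpr]
  · simp
  · simpa using (by omega : n < m.toNat)

lemma sqE (n : ℕ)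
    (Sq : Derivation (ZMod 2) (MvPolynomial (Fin n) (ZMod 2)) (MvPolynomial (Fin n) (ZMod 2)))
    (hSq : ∀ i : ℕ, 1 ≤ i → i ≤ n →
      Sq (eZ n (i : ℤ)) = ((i + 1 : ℕ) : ZMod 2) • eZ n ((i : ℤ) + 1) + eZ n 1 * eZ n (i : ℤ))
    (m : ℤ) :
    Sq (eZ n m) = ((m + 1 : ℤ) : ZMod 2) • eZ n (m + 1) + eZ n 1 * eZ n m := by
  rcases lt_trichotomy m 0 with h | h | h
  · rw [eZ_neg h, map_zero, mul_zero, add_zero]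
    rcases eq_or_lt_of_le (show m ≤ -1 by omega) with h1 | h1
    · subst h1; norm_num
    · rw [eZ_neg (by omega), smul_zero]
  · subst h
    rw [eZ_zero, Derivation.map_one_eq_zero]
    norm_num
    exact (CharTwo.add_self_eq_zero _).symm
  · set k := m.toNat with hk
    have hm : m = (k : ℤ) := by omega
    by_cases hkn : k ≤ n
    · have := hSq k (by omega) hkn
      rw [hm, this]
      push_cast
      ring
    · rw [eZ_gt (by omega), eZ_gt (by omega : (n : ℤ) < m + 1), map_zero, mul_zero, smul_zero,
        add_zero]

lemma schurE_snoc (n l : ℕ) (hl : 0 < l) (a : Fin l → ℕ) :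
    schurE n (l + 1) (Fin.snoc a 1)
      = ((Matrix.of fun i j : Fin l => eZ n ((a i : ℤ) - i + j)).updateCol
            ⟨l - 1, by omega⟩ (fun r => eZ n ((a r : ℤ) - r + l))).det
        + eZ n 1 * (Matrix.of fun i j : Fin l => eZ n ((a i : ℤ) - i + j)).det := by
  classical
  rw [schurE]
  set M := Matrix.of fun i j : Fin l => eZ n ((a i : ℤ) - i + j) with hM
  set A := Matrix.of fun i j : Fin (l + 1) =>
    eZ n (((Fin.snoc a 1 : Fin (l + 1) → ℕ) i : ℤ) - i + j) with hA
  have hneg : (-1 : MvPolynomial (Fin n) (ZMod 2)) = 1 := CharTwo.neg_eq 1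
  have hrow : ∀ j : Fin (l + 1), A (Fin.last l) j = eZ n (1 - l + j) := by
    intro j
    simp [hA]
  set j1 : Fin (l + 1) := ⟨l - 1, by omega⟩ with hj1
  rw [Matrix.det_succ_row A (Fin.last l)]
  have key : ∀ j ∈ (Finset.univ : Finset (Fin (l+1))),
      j ∉ ({j1, Fin.last l} : Finset (Fin (l + 1))) →
      (-1 : MvPolynomial (Fin n) (ZMod 2)) ^ ((Fin.last l : ℕ) + (j : ℕ)) * A (Fin.last l) j *
        (A.submatrix (Fin.last l).succAbove j.succAbove).det = 0 := by
    intro j _ hj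
    simp only [Finset.mem_insert, Finset.mem_singleton] at hj
    push_neg at hj
    obtain ⟨h1, h2⟩ := hj
    have hv1 : (j : ℕ) ≠ l - 1 := fun h => h1 (Fin.ext h)
    have hv2 : (j : ℕ) ≠ l := fun h => h2 (Fin.ext h)
    have : (j : ℕ) < l - 1 := by have := j.isLt; omega
    rw [hrow, eZ_neg (by omega), mul_zero, zero_mul]
  rw [← Finset.sum_subset (Finset.subset_univ ({j1, Fin.last l} : Finset (Fin (l + 1)))) key,
    Finset.sum_insert (by simp [hj1, Fin.ext_iff]; omega), Finset.sum_singleton]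
  have e1 : A (Fin.last l) j1 = 1 := by
    rw [hrow, show (1 - (l : ℤ) + ((j1 : ℕ) : ℤ)) = 0 from by simp [hj1]; omega, eZ_zero]
  have e2 : A (Fin.last l) (Fin.last l) = eZ n 1 := by
    rw [hrow]
    congr 1
    simp [Fin.val_last]
  have hminor2 : A.submatrix (Fin.last l).succAbove (Fin.last l).succAbove = M := by
    ext i j
    simp [hA, hM, Fin.succAbove_last, Fin.snoc_castSucc]
  have hminor1 : A.submatrix (Fin.last l).succAbove j1.succAbove
      = M.updateCol ⟨l - 1, by omega⟩ (fun r => eZ n ((a r : ℤ) - r + l)) := by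
    ext i j
    rw [Fin.succAbove_last]
    have hle : (j : ℕ) ≤ l - 1 := by have := j.isLt; omega
    rcases lt_or_eq_of_le hle with hlt | heq
    · have hsa : j1.succAbove j = Fin.castSucc j :=
        Fin.succAbove_of_castSucc_lt _ _ (by rw [Fin.lt_def]; simpa using hlt)
      rw [Matrix.updateCol_ne (by simp [Fin.ext_iff]; omega)]
      simp [Matrix.submatrix_apply, hsa, hA, hM, Fin.snoc_castSucc]
    · have hsa : j1.succAbove j = Fin.succ j :=
        Fin.succAbove_of_le_castSucc _ _ (by rw [Fin.le_def]; simp [hj1]; omega)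
      have lhs : A.submatrix Fin.castSucc j1.succAbove i j = eZ n ((a i : ℤ) - i + l) := by
        rw [Matrix.submatrix_apply, hsa]
        simp only [hA, Matrix.of_apply, Fin.snoc_castSucc, Fin.coe_castSucc, Fin.val_succ]
        congr 1
        push_cast
        omega
      rw [lhs, show j = (⟨l - 1, by omega⟩ : Fin l) from Fin.ext heq, Matrix.updateCol_self]
  rw [e1, e2, hminor1, hminor2, hneg]
  simp only [one_pow, one_mul, mul_one]

theorem stmt1 (n l : ℕ)
    (Sq : Derivation (ZMod 2) (MvPolynomial (Fin n) (ZMod 2)) (MvPolynomial (Fin n) (ZMod 2)))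
    (hSq : ∀ i : ℕ, 1 ≤ i → i ≤ n →
      Sq (eZ n (i : ℤ)) = ((i + 1 : ℕ) : ZMod 2) • eZ n ((i : ℤ) + 1) + eZ n 1 * eZ n (i : ℤ))
    (a : Fin l → ℕ) (hdec : ∀ i j : Fin l, i ≤ j → a j ≤ a i) (hbd : ∀ i, a i ≤ n) :
    Sq (schurE n l a) =
      (∑ i : Fin l, (((a i : ℤ) - (i : ℤ) : ℤ) : ZMod 2) •
          schurE n l (Function.update a i (a i + 1)))
        + (l : ZMod 2) • schurE n (l + 1) (Fin.snoc a 1) := by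
  classical
  rcases Nat.eq_zero_or_pos l with rfl | hl
  · have h1 : schurE n 0 a = 1 := by
      rw [schurE]
      exact Matrix.det_isEmpty
    rw [h1, Derivation.map_one_eq_zero]
    simp
  set M := Matrix.of fun i j : Fin l => eZ n ((a i : ℤ) - i + j) with hM
  set cl : Fin l := ⟨l - 1, by omega⟩ with hcl
  have hdet : Sq (schurE n l a) = ∑ c, (M.updateCol c (fun r => Sq (M r c))).det := by
    rw [schurE, ← hM]
    exact deriv_det Sq M
  have hsplit : ∀ c : Fin l, (M.updateCol c (fun r => Sq (M r c))).det
      = (M.updateCol c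
          (fun r => (((a r : ℤ) - (r : ℤ) : ℤ) : ZMod 2) • eZ n ((a r : ℤ) - r + c + 1))).det
      + ((M.updateCol c
          (fun r => (((c : ℤ) + 1 : ℤ) : ZMod 2) • eZ n ((a r : ℤ) - r + c + 1))).det
        + (M.updateCol c (fun r => eZ n 1 * eZ n ((a r : ℤ) - r + c))).det) := by
    intro c
    have hfun : (fun r => Sq (M r c))
        = (fun r => (((a r : ℤ) - (r : ℤ) : ℤ) : ZMod 2) • eZ n ((a r : ℤ) - r + c + 1))
          + ((fun r => (((c : ℤ) + 1 : ℤ) : ZMod 2) • eZ n ((a r : ℤ) - r + c + 1))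
            + fun r => eZ n 1 * eZ n ((a r : ℤ) - r + c)) := by
      funext r
      simp only [Pi.add_apply]
      rw [hM]
      show Sq (eZ n ((a r : ℤ) - r + c)) = _
      rw [sqE n Sq hSq ((a r : ℤ) - r + c)]
      have hco : ((((a r : ℤ) - r + c) + 1 : ℤ) : ZMod 2)
          = (((a r : ℤ) - (r : ℤ) : ℤ) : ZMod 2) + ((((c : ℤ) + 1 : ℤ)) : ZMod 2) := by
        push_cast
        ring
      rw [show ((a r : ℤ) - r + c) + 1 = (a r : ℤ) - r + c + 1 from rfl, hco, add_smul]
      ring_nf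
    rw [hfun, Matrix.det_updateCol_add, Matrix.det_updateCol_add]
  have hX : ∑ c, (M.updateCol c
        (fun r => (((a r : ℤ) - (r : ℤ) : ℤ) : ZMod 2) • eZ n ((a r : ℤ) - r + c + 1))).det
      = ∑ i : Fin l, (((a i : ℤ) - (i : ℤ) : ℤ) : ZMod 2) •
          schurE n l (Function.update a i (a i + 1)) := by
    rw [sum_det_updateColumn_eq_sum_det_updateRow M
      (fun r c => (((a r : ℤ) - (r : ℤ) : ℤ) : ZMod 2) • eZ n ((a r : ℤ) - r + c + 1))]
    refine Finset.sum_congr rfl fun r _ => ?_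
    rw [det_updateRow_smul' M r (((a r : ℤ) - (r : ℤ) : ℤ) : ZMod 2)
      (fun c => eZ n ((a r : ℤ) - r + c + 1))]
    congr 1
    rw [schurE]
    congr 1
    ext i j
    rw [Matrix.updateRow_apply]
    by_cases h : i = r
    · subst h
      rw [if_pos rfl]
      simp only [Matrix.of_apply, Function.update_self]
      congr 1
      push_cast
      ring
    · rw [if_neg h]
      simp [hM, Function.update_of_ne h]
  have hY : ∑ c, (M.updateCol c
        (fun r => (((c : ℤ) + 1 : ℤ) : ZMod 2) • eZ n ((a r : ℤ) - r + c + 1))).det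
      = (l : ZMod 2) • (M.updateCol cl (fun r => eZ n ((a r : ℤ) - r + l))).det := by
    rw [Finset.sum_eq_single cl]
    · rw [det_updateColumn_smul' M cl ((((cl : ℤ) + 1 : ℤ)) : ZMod 2)
        (fun r => eZ n ((a r : ℤ) - r + cl + 1))]
      have hcoef : ((((cl : ℤ) + 1 : ℤ)) : ZMod 2) = (l : ZMod 2) := by
        rw [hcl]
        show ((((l - 1 : ℕ) : ℤ) + 1 : ℤ) : ZMod 2) = (l : ZMod 2)
        rw [show ((l - 1 : ℕ) : ℤ) + 1 = (l : ℤ) from by omega]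
        push_cast
        rfl
      have hcol2 : (fun r => eZ n ((a r : ℤ) - r + cl + 1))
          = fun r => eZ n ((a r : ℤ) - r + l) := by
        funext r
        congr 1
        show (a r : ℤ) - r + ((l - 1 : ℕ) : ℤ) + 1 = (a r : ℤ) - r + l
        omega
      rw [hcoef, hcol2]
    · intro c _ hc
      have hcv : (c : ℕ) < l - 1 := by
        have h1 : (c : ℕ) ≠ l - 1 := fun h => hc (Fin.ext h)
        have := c.isLt
        omega
      set c' : Fin l := ⟨(c : ℕ) + 1, by omega⟩ with hc'
      rw [det_updateColumn_smul' M c ((((c : ℤ) + 1 : ℤ)) : ZMod 2)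
        (fun r => eZ n ((a r : ℤ) - r + c + 1))]
      have hcol : (fun r => eZ n ((a r : ℤ) - r + c + 1)) = fun r => M r c' := by
        funext r
        rw [hM]
        show eZ n ((a r : ℤ) - r + c + 1) = eZ n ((a r : ℤ) - r + ((c : ℕ) + 1 : ℕ))
        congr 1
        push_cast
        ring
      have hcv' : (c' : ℕ) = (c : ℕ) + 1 := rfl
      have hne : c ≠ c' := Fin.ne_of_val_ne (by omega)
      have hne' : c' ≠ c := Fin.ne_of_val_ne (by omega)
      have hzero : (M.updateCol c (fun r => M r c')).det = 0 := by
        refine Matrix.det_zero_of_column_eq hne fun k => ?_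
        rw [Matrix.updateCol_self, Matrix.updateCol_ne hne']
      rw [hcol, hzero, smul_zero]
    · intro h
      exact absurd (Finset.mem_univ cl) h
  have hZ : ∑ c : Fin l, (M.updateCol c (fun r => eZ n 1 * eZ n ((a r : ℤ) - r + c))).det
      = (l : ZMod 2) • (eZ n 1 * M.det) := by
    have hc : ∀ c : Fin l,
        (M.updateCol c (fun r => eZ n 1 * eZ n ((a r : ℤ) - r + c))).det
          = eZ n 1 * M.det := by
      intro c
      have h1 : (fun r => eZ n 1 * eZ n ((a r : ℤ) - r + c)) = eZ n 1 • (fun r => M r c) := by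
        funext r
        rw [hM]
        rfl
      rw [h1, Matrix.det_updateCol_smul, Matrix.updateCol_eq_self]
    rw [Finset.sum_congr rfl (fun c _ => hc c), Finset.sum_const, Finset.card_univ,
      Fintype.card_fin, ← Nat.cast_smul_eq_nsmul (ZMod 2)]
  calc Sq (schurE n l a)
      = ∑ c : Fin l, ((M.updateCol c
          (fun r => (((a r : ℤ) - (r : ℤ) : ℤ) : ZMod 2) • eZ n ((a r : ℤ) - r + c + 1))).det
        + ((M.updateCol c
          (fun r => (((c : ℤ) + 1 : ℤ) : ZMod 2) • eZ n ((a r : ℤ) - r + c + 1))).det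
        + (M.updateCol c (fun r => eZ n 1 * eZ n ((a r : ℤ) - r + c))).det)) := by
        rw [hdet]
        exact Finset.sum_congr rfl fun c _ => hsplit c
    _ = (∑ c : Fin l, (M.updateCol c
          (fun r => (((a r : ℤ) - (r : ℤ) : ℤ) : ZMod 2) • eZ n ((a r : ℤ) - r + c + 1))).det)
        + ((∑ c : Fin l, (M.updateCol c
          (fun r => (((c : ℤ) + 1 : ℤ) : ZMod 2) • eZ n ((a r : ℤ) - r + c + 1))).det)
        + ∑ c : Fin l, (M.updateCol c (fun r => eZ n 1 * eZ n ((a r : ℤ) - r + c))).det) := by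
        rw [Finset.sum_add_distrib, Finset.sum_add_distrib]
    _ = (∑ i : Fin l, (((a i : ℤ) - (i : ℤ) : ℤ) : ZMod 2) •
          schurE n l (Function.update a i (a i + 1)))
        + (l : ZMod 2) • schurE n (l + 1) (Fin.snoc a 1) := by
        rw [hX, hY, hZ, schurE_snoc n l hl a, smul_add]
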